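/- In a regular vine on d elements, the total number of edges over all trees is d(d-1)/2, and each edge corresponds to a distinct unordered pair {a_e, b_e} of elements of V_1; hence the map e ↦ {a_e, b_e} from the set of all edges of the vine to unordered pairs of V_1 is a bijection. -/

import Mathlib

open Finset

variable {α : Type*} [DecidableEq α] [Fintype α]

/-- The simple graph on `α` induced by a finite set of unordered pairs. -/
def graphOf (E : Finset (Sym2 α)) : SimpleGraph α where
  Adj x y := x ≠ y ∧ s(x, y) ∈ E
  symm := by
    constructor
    intro x y h
    refine ⟨h.1.symm, ?_⟩
    rw [Sym2.eq_swap]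
    exact h.2
  loopless := ⟨fun x h => h.1 rfl⟩

/-- `(V, E)` is a finite tree: edges join distinct vertices of `V`, the induced
graph is acyclic, and all vertices of `V` are mutually reachable. -/
def IsTreeOn (V : Finset α) (E : Finset (Sym2 α)) : Prop :=
  (∀ e ∈ E, ∀ x ∈ e, x ∈ V) ∧ (∀ e ∈ E, ¬ e.IsDiag) ∧
    (graphOf E).IsAcyclic ∧ ∀ x ∈ V, ∀ y ∈ V, (graphOf E).Reachable x y

/-- Complete union of an edge: the union of the complete unions of its endpoints
(each vertex of a tree of the vine is identified with its complete union). -/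
def eUnion (e : Sym2 (Finset α)) : Finset α :=
  Sym2.lift ⟨fun A B => A ∪ B, fun A B => union_comm A B⟩ e

/-- Conditioning set `D_e` of an edge. -/
def condSet (e : Sym2 (Finset α)) : Finset α :=
  Sym2.lift ⟨fun A B => A ∩ B, fun A B => inter_comm A B⟩ e

/-- Conditioned set `{a_e, b_e}` of an edge. -/
def condPair (e : Sym2 (Finset α)) : Finset α :=
  Sym2.lift ⟨fun A B => symmDiff A B, fun A B => symmDiff_comm A B⟩ e

/-- A regular vine on a finite set `α` of `d = Fintype.card α` elements.  The
vertices of tree `k` (for `k = 1, …, d-1`) are identified with their complete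
unions, subsets of `α`; `V (k+1) = E k` is expressed via complete unions. -/
structure RegularVine (α : Type*) [DecidableEq α] [Fintype α] where
  V : ℕ → Finset (Finset α)
  E : ℕ → Finset (Sym2 (Finset α))
  hV1 : V 1 = Finset.univ.image (fun a : α => ({a} : Finset α))
  hVsucc : ∀ k, 1 ≤ k → V (k + 1) = (E k).image eUnion
  tree : ∀ k, 1 ≤ k → k + 1 ≤ Fintype.card α → IsTreeOn (V k) (E k)
  hEzero : ∀ k, k = 0 ∨ Fintype.card α ≤ k → E k = ∅
  proximity : ∀ k, 1 ≤ k → ∀ p ∈ E (k + 1),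
    ∃ a ∈ E k, ∃ b ∈ E k, p = s(eUnion a, eUnion b) ∧ ∃ v, v ∈ a ∧ v ∈ b

/-- A tree `(V, E)` is a path: it is a tree and every vertex has degree at most 2. -/
def IsPathOn (V : Finset α) (E : Finset (Sym2 α)) : Prop :=
  IsTreeOn V E ∧ ∀ v ∈ V, (E.filter (fun e => v ∈ e)).card ≤ 2

/-- A permutation `(i_1, …, i_d) = (σ 0, …, σ (d-1))` is compatible with a vine on
`Fin d`: for every `k` there is an edge of tree `k` with conditioned set
`{σ k, σ r}` (some `r < k`) and conditioning set `{σ 0, …, σ (k-1)} \ {σ r}`. -/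
def Compatible {d : ℕ} (𝒱 : RegularVine (Fin d)) (σ : Fin d → Fin d) : Prop :=
  ∀ k : Fin d, 1 ≤ (k : ℕ) → ∃ r : Fin d, r < k ∧ ∃ e ∈ 𝒱.E (k : ℕ),
    condPair e = {σ k, σ r} ∧
    condSet e = ((Finset.univ.filter (fun s : Fin d => s < k)).image σ).erase (σ r)


set_option linter.unusedSectionVars false

lemma graphOf_adj {E : Finset (Sym2 α)} {x y : α} :
    (graphOf E).Adj x y ↔ x ≠ y ∧ s(x, y) ∈ E := Iff.rfl

lemma graphOf_mono {E F : Finset (Sym2 α)} (h : E ⊆ F) : graphOf E ≤ graphOf F :=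
  fun _ _ ha => ⟨ha.1, h ha.2⟩

lemma walk_support_mem {V : Finset α} {E : Finset (Sym2 α)}
    (hVE : ∀ e ∈ E, ∀ x ∈ e, x ∈ V) {u v : α} (p : (graphOf E).Walk u v)
    (hu : u ∈ V) : ∀ z ∈ p.support, z ∈ V := by
  induction p with
  | nil => intro z hz; simp only [SimpleGraph.Walk.support_nil, List.mem_singleton] at hz
           exact hz ▸ hu
  | cons h q ih =>
      intro z hz
      rw [SimpleGraph.Walk.support_cons, List.mem_cons] at hz
      rcases hz with rfl | hz
      · exact hu
      · exact ih (hVE _ h.2 _ (Sym2.mem_mk_right _ _)) z hz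

lemma IsTreeOn.card_edges {V : Finset α} {E : Finset (Sym2 α)}
    (h : IsTreeOn V E) (hne : V.Nonempty) : E.card + 1 = V.card := by
  classical
  obtain ⟨hVE, hnd, hac, hconn⟩ := h
  set G : SimpleGraph α := graphOf E with hG
  set G' : SimpleGraph (↑V : Set α) := G.induce (↑V : Set α) with hG'
  obtain ⟨u0, hu0⟩ := hne
  have hconn' : G'.Connected := by
    apply SimpleGraph.induce_connected_of_patches u0 (by simpa using hu0)
    intro v hv
    obtain ⟨p⟩ := hconn u0 hu0 v (by simpa using hv)
    refine ⟨{z | z ∈ p.support}, ?_, p.start_mem_support, p.end_mem_support, ?_⟩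
    · intro z hz
      exact walk_support_mem hVE p hu0 z hz
    · exact (p.connected_induce_support).preconnected _ _
  have hac' : G'.IsAcyclic := by
    intro v c hc
    exact hac ((c.map (SimpleGraph.Embedding.induce (G := G) (↑V : Set α)).toHom))
      (hc.map (SimpleGraph.Embedding.induce (G := G) (↑V : Set α)).injective)
  have htree : G'.IsTree := ⟨hconn', hac'⟩
  have hcards := htree.card_edgeFinset
  have : Fintype.card (↑V : Set α) = V.card := by
    simpa using Fintype.card_coe V
  rw [this] at hcards
  rw [← hcards]
  congr 1
  symm
  refine Finset.card_bij (fun (e : Sym2 (↑V : Set α)) _ => Sym2.map Subtype.val e) ?_ ?_ ?_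
  · rintro e he
    induction e with
    | _ a b =>
      rw [SimpleGraph.mem_edgeFinset, SimpleGraph.mem_edgeSet] at he
      have : G.Adj a.1 b.1 := he
      exact this.2
  · intro e1 h1 e2 h2 heq
    exact Sym2.map.injective Subtype.val_injective heq
  · intro e he
    induction e with
    | _ a b =>
      have ha : a ∈ V := hVE _ he _ (Sym2.mem_mk_left _ _)
      have hb : b ∈ V := hVE _ he _ (Sym2.mem_mk_right _ _)
      have hab : a ≠ b := by
        intro h; exact hnd _ he (by simp [h])
      refine ⟨s(⟨a, by simpa using ha⟩, ⟨b, by simpa using hb⟩), ?_, rfl⟩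
      rw [SimpleGraph.mem_edgeFinset, SimpleGraph.mem_edgeSet]
      show G.Adj a b
      exact ⟨hab, he⟩

@[simp] lemma eUnion_mk (A B : Finset α) : eUnion s(A, B) = A ∪ B := rfl
@[simp] lemma condSet_mk (A B : Finset α) : condSet s(A, B) = A ∩ B := rfl
@[simp] lemma condPair_mk (A B : Finset α) : condPair s(A, B) = symmDiff A B := rfl

lemma subset_eUnion_of_mem {t : Finset α} {e : Sym2 (Finset α)} (h : t ∈ e) :
    t ⊆ eUnion e := by
  induction e with
  | _ A B =>
    rw [Sym2.mem_iff] at h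
    rcases h with rfl | rfl
    · exact subset_union_left
    · exact subset_union_right

lemma condPair_subset_eUnion (e : Sym2 (Finset α)) : condPair e ⊆ eUnion e := by
  induction e with
  | _ A B =>
    intro z hz
    rw [condPair_mk] at hz
    rw [Finset.mem_symmDiff] at hz
    rw [eUnion_mk, Finset.mem_union]
    tauto

lemma acyclic_not_reachable {E F : Finset (Sym2 α)} (hac : (graphOf E).IsAcyclic)
    {a b : α} (hab : a ≠ b) (he : s(a, b) ∈ E) (hF : F ⊆ E) (hFe : s(a, b) ∉ F) :
    ¬ (graphOf F).Reachable a b := by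
  intro hr
  have hbr := (SimpleGraph.isAcyclic_iff_forall_edge_isBridge.mp hac)
    (e := s(a, b)) (((graphOf E).mem_edgeSet).mpr ⟨hab, he⟩)
  rw [SimpleGraph.isBridge_iff] at hbr
  apply hbr
  apply hr.mono
  intro x y hxy
  rw [SimpleGraph.deleteEdges, SimpleGraph.sdiff_adj]
  refine ⟨⟨hxy.1, hF hxy.2⟩, ?_⟩
  rw [SimpleGraph.fromEdgeSet_adj]
  rintro ⟨hmem, -⟩
  rw [Set.mem_singleton_iff] at hmem
  exact hFe (hmem ▸ hxy.2)

/-- Subtree property: nodes containing a given element are mutually reachable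
through edges whose both endpoints contain that element. -/
def STp (V : Finset (Finset α)) (E : Finset (Sym2 (Finset α))) : Prop :=
  ∀ (x : α), ∀ v ∈ V, ∀ w ∈ V, x ∈ v → x ∈ w →
    (graphOf (E.filter (fun e => x ∈ condSet e))).Reachable v w

lemma pair_struct {V : Finset (Finset α)} {E : Finset (Sym2 (Finset α))} {k : ℕ}
    (hVE : ∀ e ∈ E, ∀ A ∈ e, A ∈ V) (hnd : ∀ e ∈ E, ¬ e.IsDiag)
    (hcard : ∀ v ∈ V, v.card = k) (hU : ∀ e ∈ E, (eUnion e).card = k + 1)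
    {e : Sym2 (Finset α)} (he : e ∈ E) :
    ∃ A B x y, e = s(A, B) ∧ A ∈ V ∧ B ∈ V ∧ x ∈ A ∧ x ∉ B ∧ y ∈ B ∧ y ∉ A ∧
      x ≠ y ∧ condPair e = {x, y} := by
  induction e with
  | _ A B =>
    have hA : A ∈ V := hVE _ he _ (Sym2.mem_mk_left _ _)
    have hB : B ∈ V := hVE _ he _ (Sym2.mem_mk_right _ _)
    have hAB : A ≠ B := by
      intro h; exact hnd _ he (by simp [h])
    have hcA : A.card = k := hcard _ hA
    have hcB : B.card = k := hcard _ hB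
    have hcU : (A ∪ B).card = k + 1 := hU _ he
    have h1 : (A \ B).card = 1 := by
      have := Finset.card_sdiff_add_card (s := A) (t := B)
      omega
    have h2 : (B \ A).card = 1 := by
      have := Finset.card_sdiff_add_card (s := B) (t := A)
      rw [union_comm] at this
      omega
    obtain ⟨x, hx⟩ := Finset.card_eq_one.mp h1
    obtain ⟨y, hy⟩ := Finset.card_eq_one.mp h2
    have hxA : x ∈ A ∧ x ∉ B := by
      have : x ∈ A \ B := hx ▸ mem_singleton_self x
      exact ⟨(mem_sdiff.mp this).1, (mem_sdiff.mp this).2⟩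
    have hyB : y ∈ B ∧ y ∉ A := by
      have : y ∈ B \ A := hy ▸ mem_singleton_self y
      exact ⟨(mem_sdiff.mp this).1, (mem_sdiff.mp this).2⟩
    refine ⟨A, B, x, y, rfl, hA, hB, hxA.1, hxA.2, hyB.1, hyB.2, ?_, ?_⟩
    · rintro rfl; exact hxA.2 hyB.1
    · rw [condPair_mk, symmDiff_def, sup_eq_union, hx, hy]
      rfl

lemma UIT_core {V : Finset (Finset α)} {E : Finset (Sym2 (Finset α))}
    (htree : IsTreeOn V E) (hst : STp V E)
    {A B C D : Finset α} {x y : α} (he : s(A, B) ∈ E) (hf : s(C, D) ∈ E)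
    (hxA : x ∈ A) (hxB : x ∉ B) (hyB : y ∈ B) (hyA : y ∉ A)
    (hxC : x ∈ C) (hxD : x ∉ D) (hyD : y ∈ D) (hyC : y ∉ C)
    (hne : s(A, B) ≠ s(C, D)) : False := by
  obtain ⟨hVE, hnd, hac, hconn⟩ := htree
  have hA : A ∈ V := hVE _ he _ (Sym2.mem_mk_left _ _)
  have hB : B ∈ V := hVE _ he _ (Sym2.mem_mk_right _ _)
  have hC : C ∈ V := hVE _ hf _ (Sym2.mem_mk_left _ _)
  have hD : D ∈ V := hVE _ hf _ (Sym2.mem_mk_right _ _)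
  have hABne : A ≠ B := fun h => hxB (h ▸ hxA)
  have hCDne : C ≠ D := fun h => hxD (h ▸ hxC)
  set Fx := E.filter (fun e => x ∈ condSet e) with hFx
  set Fy := E.filter (fun e => y ∈ condSet e) with hFy
  set F := insert s(C, D) (Fx ∪ Fy) with hF
  have hFE : F ⊆ E := by
    intro e' he'
    rw [hF, mem_insert, mem_union] at he'
    rcases he' with rfl | h | h
    · exact hf
    · exact (mem_filter.mp h).1
    · exact (mem_filter.mp h).1
  have hABF : s(A, B) ∉ F := by
    rw [hF, mem_insert, mem_union]
    rintro (h | h | h)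
    · exact hne h
    · exact hxB (mem_inter.mp ((mem_filter.mp h).2 : x ∈ condSet s(A,B))).2
    · exact hyA (mem_inter.mp ((mem_filter.mp h).2 : y ∈ condSet s(A,B))).1
  have r1 : (graphOf F).Reachable A C :=
    (hst x A hA C hC hxA hxC).mono (graphOf_mono (by
      intro e' he'; rw [hF, mem_insert, mem_union]; exact Or.inr (Or.inl he')))
  have r2 : (graphOf F).Reachable C D :=
    SimpleGraph.Adj.reachable ⟨hCDne, mem_insert_self _ _⟩
  have r3 : (graphOf F).Reachable D B :=
    (hst y D hD B hB hyD hyB).mono (graphOf_mono (by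
      intro e' he'; rw [hF, mem_insert, mem_union]; exact Or.inr (Or.inr he')))
  exact acyclic_not_reachable hac hABne he hFE hABF ((r1.trans r2).trans r3)

lemma NII {V : Finset (Finset α)} {E : Finset (Sym2 (Finset α))}
    (htree : IsTreeOn V E) (hst : STp V E)
    {A B : Finset α} {x y : α} (he : s(A, B) ∈ E)
    (hxA : x ∈ A) (hxB : x ∉ B) (hyB : y ∈ B) (hyA : y ∉ A)
    {u : Finset α} (hu : u ∈ V) (hxu : x ∈ u) (hyu : y ∈ u) : False := by
  obtain ⟨hVE, hnd, hac, hconn⟩ := htree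
  have hA : A ∈ V := hVE _ he _ (Sym2.mem_mk_left _ _)
  have hB : B ∈ V := hVE _ he _ (Sym2.mem_mk_right _ _)
  have hABne : A ≠ B := fun h => hxB (h ▸ hxA)
  set Fx := E.filter (fun e => x ∈ condSet e) with hFx
  set Fy := E.filter (fun e => y ∈ condSet e) with hFy
  set F := Fx ∪ Fy with hF
  have hFE : F ⊆ E := by
    intro e' he'
    rw [hF, mem_union] at he'
    rcases he' with h | h
    · exact (mem_filter.mp h).1
    · exact (mem_filter.mp h).1
  have hABF : s(A, B) ∉ F := by
    rw [hF, mem_union]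
    rintro (h | h)
    · exact hxB (mem_inter.mp ((mem_filter.mp h).2 : x ∈ condSet s(A,B))).2
    · exact hyA (mem_inter.mp ((mem_filter.mp h).2 : y ∈ condSet s(A,B))).1
  have r1 : (graphOf F).Reachable A u :=
    (hst x A hA u hu hxA hxu).mono (graphOf_mono subset_union_left)
  have r2 : (graphOf F).Reachable u B :=
    (hst y u hu B hB hyu hyB).mono (graphOf_mono subset_union_right)
  exact acyclic_not_reachable ((⟨hVE, hnd, hac, hconn⟩ : IsTreeOn V E)).2.2.1
    hABne he hFE hABF (r1.trans r2)

lemma condPair_inj {V : Finset (Finset α)} {E : Finset (Sym2 (Finset α))} {k : ℕ}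
    (htree : IsTreeOn V E)
    (hcard : ∀ v ∈ V, v.card = k) (hU : ∀ e ∈ E, (eUnion e).card = k + 1)
    (hst : STp V E) :
    ∀ e ∈ E, ∀ f ∈ E, condPair e = condPair f → e = f := by
  intro e he f hf hpp
  by_contra hne
  obtain ⟨A, B, x, y, rfl, hA, hB, hxA, hxB, hyB, hyA, hxy, hpe⟩ :=
    pair_struct htree.1 htree.2.1 hcard hU he
  obtain ⟨C, D, x', y', rfl, hC, hD, hxC, hxD, hyD, hyC, hxy', hpf⟩ :=
    pair_struct htree.1 htree.2.1 hcard hU hf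
  rw [hpe, hpf] at hpp
  have hx' : x' = x ∨ x' = y := by
    have : x' ∈ ({x, y} : Finset α) := hpp ▸ mem_insert_self _ _
    simpa using this
  have hy' : y' = x ∨ y' = y := by
    have : y' ∈ ({x, y} : Finset α) := hpp ▸ mem_insert_of_mem (mem_singleton_self _)
    simpa using this
  have hcs : (x' = x ∧ y' = y) ∨ (x' = y ∧ y' = x) := by
    rcases hx' with h1 | h1 <;> rcases hy' with h2 | h2
    · exact absurd (h1.trans h2.symm) hxy'
    · exact Or.inl ⟨h1, h2⟩
    · exact Or.inr ⟨h1, h2⟩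
    · exact absurd (h1.trans h2.symm) hxy'
  rcases hcs with ⟨h1, h2⟩ | ⟨h1, h2⟩
  · exact UIT_core htree hst he hf hxA hxB hyB hyA
      (h1 ▸ hxC) (h1 ▸ hxD) (h2 ▸ hyD) (h2 ▸ hyC) hne
  · have hf' : s(D, C) ∈ E := by rwa [Sym2.eq_swap]
    have hne' : s(A, B) ≠ s(D, C) := by
      intro hcon; apply hne; rw [hcon, Sym2.eq_swap]
    exact UIT_core htree hst he hf' hxA hxB hyB hyA
      (h2 ▸ hyD) (h2 ▸ hyC) (h1 ▸ hxC) (h1 ▸ hxD) hne'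

lemma injOn_eUnion {V : Finset (Finset α)} {E : Finset (Sym2 (Finset α))} {k : ℕ}
    (htree : IsTreeOn V E)
    (hcard : ∀ v ∈ V, v.card = k) (hU : ∀ e ∈ E, (eUnion e).card = k + 1)
    (hst : STp V E) :
    Set.InjOn eUnion (E : Set (Sym2 (Finset α))) := by
  intro e he f hf heq
  rw [Finset.mem_coe] at he hf
  obtain ⟨A, B, x, y, hee, hA, hB, hxA, hxB, hyB, hyA, hxy, hpe⟩ :=
    pair_struct htree.1 htree.2.1 hcard hU he
  obtain ⟨C, D, x', y', hff, hC, hD, hxC, hxD, hyD, hyC, hxy', hpf⟩ :=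
    pair_struct htree.1 htree.2.1 hcard hU hf
  -- x and y both lie in eUnion f = eUnion e
  have hxU : x ∈ eUnion f := by
    rw [← heq, hee, eUnion_mk, mem_union]; exact Or.inl hxA
  have hyU : y ∈ eUnion f := by
    rw [← heq, hee, eUnion_mk, mem_union]; exact Or.inr hyB
  rw [hff, eUnion_mk, mem_union] at hxU hyU
  -- no endpoint of f contains both x and y
  have hno : ∀ u ∈ V, ¬ (x ∈ u ∧ y ∈ u) := by
    rintro u hu ⟨h1, h2⟩
    exact NII htree hst (hee ▸ he) hxA hxB hyB hyA hu h1 h2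
  have hxp : x ∈ condPair f := by
    rw [hff, condPair_mk, Finset.mem_symmDiff]
    rcases hxU with h | h
    · refine Or.inl ⟨h, fun hD' => ?_⟩
      rcases hyU with h2 | h2
      · exact hno C hC ⟨h, h2⟩
      · exact hno D hD ⟨hD', h2⟩
    · refine Or.inr ⟨h, fun hC' => ?_⟩
      rcases hyU with h2 | h2
      · exact hno C hC ⟨hC', h2⟩
      · exact hno D hD ⟨h, h2⟩
  have hyp : y ∈ condPair f := by
    rw [hff, condPair_mk, Finset.mem_symmDiff]
    rcases hyU with h | h
    · refine Or.inl ⟨h, fun hD' => ?_⟩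
      rcases hxU with h2 | h2
      · exact hno C hC ⟨h2, h⟩
      · exact hno D hD ⟨h2, hD'⟩
    · refine Or.inr ⟨h, fun hC' => ?_⟩
      rcases hxU with h2 | h2
      · exact hno C hC ⟨h2, hC'⟩
      · exact hno D hD ⟨h2, h⟩
  have hsub : ({x, y} : Finset α) ⊆ condPair f := by
    intro z hz
    rcases mem_insert.mp hz with rfl | hz
    · exact hxp
    · exact (mem_singleton.mp hz) ▸ hyp
  have hcard2 : (condPair f).card ≤ ({x, y} : Finset α).card := by
    rw [hpf]
    rw [card_insert_of_notMem (by simpa using hxy'), card_singleton,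
        card_insert_of_notMem (by simpa using hxy), card_singleton]
  have : condPair e = condPair f := by
    rw [hpe, Finset.eq_of_subset_of_card_le hsub hcard2]
  exact condPair_inj htree hcard hU hst e he f hf this

lemma chainR {Vk : Finset (Finset α)} {Ek Ek1 : Finset (Sym2 (Finset α))}
    (hVE : ∀ e ∈ Ek, ∀ A ∈ e, A ∈ Vk) (hnd : ∀ e ∈ Ek, ¬ e.IsDiag)
    (hinj : Set.InjOn eUnion (Ek : Set (Sym2 (Finset α))))
    (hprox : ∀ p ∈ Ek1, ∃ a ∈ Ek, ∃ b ∈ Ek,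
      p = s(eUnion a, eUnion b) ∧ ∃ t, t ∈ a ∧ t ∈ b)
    (x : α) (v : Finset α) :
    ∀ {u w : Finset α} (q : (graphOf Ek1).Walk u w),
      (∀ z ∈ q.support, z ≠ v) → x ∈ w →
      ∀ eu ∈ Ek, eUnion eu = u → ∀ t ∈ eu,
      ∃ s', s' ∈ Vk ∧ x ∈ s' ∧
        (graphOf (Ek.filter (fun e => eUnion e ≠ v))).Reachable t s' := by
  intro u w q
  induction q with
  | nil =>
    intro hnv hxw eu heu hequ t ht
    have huv := hnv _ (SimpleGraph.Walk.start_mem_support _)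
    set t' := (Sym2.Mem.other ht) with ht'
    have hspec : s(t, t') = eu := Sym2.other_spec ht
    have htne : t ≠ t' := by
      intro h
      exact hnd _ heu (by rw [← hspec, ← h]; simp)
    have hxu : x ∈ t ∪ t' := by
      have : eUnion eu = t ∪ t' := by rw [← hspec]; rfl
      rw [← this, hequ]; exact hxw
    have heuF : s(t, t') ∈ Ek.filter (fun e => eUnion e ≠ v) := by
      rw [mem_filter, hspec]
      exact ⟨heu, by rw [hequ]; exact huv⟩
    rcases mem_union.mp hxu with hx | hx
    · exact ⟨t, hVE _ heu _ ht, hx, SimpleGraph.Reachable.refl _⟩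
    · exact ⟨t', hVE _ heu _ (hspec ▸ Sym2.mem_mk_right t t'), hx,
        SimpleGraph.Adj.reachable ⟨htne, heuF⟩⟩
  | cons hadj q ih =>
    rename_i u u1 w'
    intro hnv hxw eu heu hequ t ht
    have huv := hnv _ (SimpleGraph.Walk.start_mem_support _)
    obtain ⟨a, ha, b, hb, habeq, t1, ht1a, ht1b⟩ := hprox _ hadj.2
    rw [Sym2.eq_iff] at habeq
    -- identify which of a,b has union u
    have mk : ∀ a' b' : Sym2 (Finset α), a' ∈ Ek → b' ∈ Ek →
        u = eUnion a' → u1 = eUnion b' → t1 ∈ a' → t1 ∈ b' →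
        ∃ eb ∈ Ek, eUnion eb = u1 ∧ ∃ t1', t1' ∈ eu ∧ t1' ∈ eb := by
      intro a' b' ha' hb' h1 h2 hta htb
      have haeq : a' = eu := hinj (by exact ha') (by exact heu) (by rw [hequ, ← h1])
      exact ⟨b', hb', h2.symm, t1, haeq ▸ hta, htb⟩
    have key : ∃ eb ∈ Ek, eUnion eb = u1 ∧ ∃ t1', t1' ∈ eu ∧ t1' ∈ eb := by
      rcases habeq with ⟨h1, h2⟩ | ⟨h1, h2⟩
      · exact mk a b ha hb h1 h2 ht1a ht1b
      · exact mk b a hb ha h1 h2 ht1b ht1a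
    obtain ⟨eb, heb, hebu, t1', ht1eu, ht1eb⟩ := key
    have hnv' : ∀ z ∈ q.support, z ≠ v := fun z hz =>
      hnv z (by rw [SimpleGraph.Walk.support_cons]; exact List.mem_cons_of_mem _ hz)
    obtain ⟨s', hs'V, hxs', hreach⟩ := ih hnv' hxw eb heb hebu t1' ht1eb
    -- step from t to t1' within eu
    have hstep : (graphOf (Ek.filter (fun e => eUnion e ≠ v))).Reachable t t1' := by
      by_cases hq : t = t1'
      · rw [hq]
      · set t'' := (Sym2.Mem.other ht) with ht''
        have hspec : s(t, t'') = eu := Sym2.other_spec ht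
        have ht1'' : t1' = t'' := by
          have : t1' ∈ s(t, t'') := hspec ▸ ht1eu
          rw [Sym2.mem_iff] at this
          rcases this with h | h
          · exact absurd h.symm hq
          · exact h
        have heuF : s(t, t1') ∈ Ek.filter (fun e => eUnion e ≠ v) := by
          rw [mem_filter, ht1'', hspec]
          exact ⟨heu, by rw [hequ]; exact huv⟩
        exact SimpleGraph.Adj.reachable ⟨hq, heuF⟩
    exact ⟨s', hs'V, hxs', hstep.trans hreach⟩

lemma ST_step {Vk : Finset (Finset α)} {Ek Ek1 : Finset (Sym2 (Finset α))}
    (htreek : IsTreeOn Vk Ek)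
    (hinj : Set.InjOn eUnion (Ek : Set (Sym2 (Finset α))))
    (hstk : STp Vk Ek)
    (hprox : ∀ p ∈ Ek1, ∃ a ∈ Ek, ∃ b ∈ Ek,
      p = s(eUnion a, eUnion b) ∧ ∃ t, t ∈ a ∧ t ∈ b) :
    ∀ {v w : Finset α} (p : (graphOf Ek1).Walk v w), p.IsPath → ∀ x : α,
      x ∈ v → x ∈ w →
      (graphOf (Ek1.filter (fun e => x ∈ condSet e))).Reachable v w := by
  obtain ⟨hVE, hnd, hac, hconn⟩ := htreek
  intro v w p
  induction p with
  | nil => intro _ x _ _; rfl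
  | cons hadj q ih =>
    rename_i v v1 w'
    intro hp x hxv hxw
    rw [SimpleGraph.Walk.cons_isPath_iff] at hp
    by_cases hx1 : x ∈ v1
    · refine SimpleGraph.Reachable.trans (SimpleGraph.Adj.reachable ?_) (ih hp.1 x hx1 hxw)
      refine ⟨hadj.1, ?_⟩
      rw [mem_filter]
      exact ⟨hadj.2, by rw [condSet_mk, mem_inter]; exact ⟨hxv, hx1⟩⟩
    · exfalso
      -- proximity for the first edge
      obtain ⟨a, ha, b, hb, habeq, t0, ht0a, ht0b⟩ := hprox _ hadj.2
      rw [Sym2.eq_iff] at habeq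
      have mk : ∀ a' b' : Sym2 (Finset α), a' ∈ Ek → b' ∈ Ek →
          v = eUnion a' → v1 = eUnion b' → t0 ∈ a' → t0 ∈ b' → False := by
        intro ev e1 hev he1 hveq hv1eq htev hte1
        -- x ∉ t0
        have hxt : x ∉ t0 := fun hxt =>
          hx1 (hv1eq ▸ subset_eUnion_of_mem hte1 hxt)
        -- run the chain along q
        have hnv : ∀ z ∈ q.support, z ≠ v := fun z hz h => hp.2 (h ▸ hz)
        obtain ⟨s', hs'V, hxs', hreach⟩ :=
          chainR hVE hnd hinj hprox x v q hnv hxw e1 he1 hv1eq.symm t0 hte1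
        -- the other endpoint of ev contains x
        set s0 := (Sym2.Mem.other htev) with hs0
        have hspec : s(t0, s0) = ev := Sym2.other_spec htev
        have ht0s0 : t0 ≠ s0 := by
          intro h
          exact hnd _ hev (by rw [← hspec, ← h]; simp)
        have hxs0 : x ∈ s0 := by
          have hxu : x ∈ t0 ∪ s0 := by
            have : eUnion ev = t0 ∪ s0 := by rw [← hspec]; rfl
            rw [← this, ← hveq]; exact hxv
          rcases mem_union.mp hxu with h | h
          · exact absurd h hxt
          · exact h
        have hs0V : s0 ∈ Vk := hVE _ hev _ (hspec ▸ Sym2.mem_mk_right t0 s0)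
        -- from s' to s0 within nodes containing x
        have hr2 : (graphOf (Ek.filter (fun e => eUnion e ≠ v))).Reachable s' s0 := by
          refine (hstk x s' hs'V s0 hs0V hxs' hxs0).mono (graphOf_mono ?_)
          intro e' he'
          rw [mem_filter] at he' ⊢
          refine ⟨he'.1, fun hv' => ?_⟩
          have : e' = ev := hinj (by exact he'.1) (by exact hev) (by rw [hv', hveq])
          rw [this, ← hspec, condSet_mk, mem_inter] at he'
          exact hxt he'.2.1
        -- contradiction with acyclicity of tree k
        have : (graphOf (Ek.filter (fun e => eUnion e ≠ v))).Reachable t0 s0 :=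
          hreach.trans hr2
        refine acyclic_not_reachable hac ht0s0 (hspec ▸ hev)
          (filter_subset _ _) ?_ this
        rw [mem_filter, hspec]
        rintro ⟨-, hcon⟩
        exact hcon hveq.symm
      rcases habeq with ⟨h1, h2⟩ | ⟨h1, h2⟩
      · exact mk a b ha hb h1 h2 ht0a ht0b
      · exact mk b a hb ha h1 h2 ht0b ht0a

lemma STp_succ {Vk Vk1 : Finset (Finset α)} {Ek Ek1 : Finset (Sym2 (Finset α))}
    (htreek : IsTreeOn Vk Ek)
    (hinj : Set.InjOn eUnion (Ek : Set (Sym2 (Finset α))))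
    (hstk : STp Vk Ek)
    (hprox : ∀ p ∈ Ek1, ∃ a ∈ Ek, ∃ b ∈ Ek,
      p = s(eUnion a, eUnion b) ∧ ∃ t, t ∈ a ∧ t ∈ b)
    (htreek1 : IsTreeOn Vk1 Ek1) : STp Vk1 Ek1 := by
  intro x v hv w hw hxv hxw
  obtain ⟨p0⟩ := htreek1.2.2.2 v hv w hw
  exact ST_step htreek hinj hstk hprox p0.bypass (SimpleGraph.Walk.bypass_isPath p0)
    x hxv hxw

lemma eUnion_card_succ {Vk : Finset (Finset α)} {Ek Ek1 : Finset (Sym2 (Finset α))} {k : ℕ}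
    (hVE : ∀ e ∈ Ek, ∀ A ∈ e, A ∈ Vk)
    (hcardV : ∀ v ∈ Vk, v.card = k) (hUk : ∀ e ∈ Ek, (eUnion e).card = k + 1)
    (hnd1 : ∀ e ∈ Ek1, ¬ e.IsDiag)
    (hprox : ∀ p ∈ Ek1, ∃ a ∈ Ek, ∃ b ∈ Ek,
      p = s(eUnion a, eUnion b) ∧ ∃ t, t ∈ a ∧ t ∈ b) :
    ∀ p ∈ Ek1, (eUnion p).card = k + 2 := by
  intro p hp
  obtain ⟨a, ha, b, hb, habeq, t, hta, htb⟩ := hprox _ hp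
  have hUne : eUnion a ≠ eUnion b := by
    intro h
    exact hnd1 _ hp (by rw [habeq, h]; simp)
  have htV : t ∈ Vk := hVE _ ha _ hta
  have htc : t.card = k := hcardV _ htV
  have hta' : t ⊆ eUnion a := subset_eUnion_of_mem hta
  have htb' : t ⊆ eUnion b := subset_eUnion_of_mem htb
  have h1 : (eUnion a \ t).card = 1 := by
    rw [card_sdiff_of_subset hta', hUk _ ha, htc]; omega
  have h2 : (eUnion b \ t).card = 1 := by
    rw [card_sdiff_of_subset htb', hUk _ hb, htc]; omega
  obtain ⟨p1, hp1⟩ := Finset.card_eq_one.mp h1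
  obtain ⟨q1, hq1⟩ := Finset.card_eq_one.mp h2
  have hp1' : p1 ∈ eUnion a ∧ p1 ∉ t := by
    have : p1 ∈ eUnion a \ t := hp1 ▸ mem_singleton_self _
    exact ⟨(mem_sdiff.mp this).1, (mem_sdiff.mp this).2⟩
  have hq1' : q1 ∈ eUnion b ∧ q1 ∉ t := by
    have : q1 ∈ eUnion b \ t := hq1 ▸ mem_singleton_self _
    exact ⟨(mem_sdiff.mp this).1, (mem_sdiff.mp this).2⟩
  have ha' : eUnion a = insert p1 t := by
    rw [← Finset.union_sdiff_of_subset hta', hp1, union_comm]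
    rfl
  have hb' : eUnion b = insert q1 t := by
    rw [← Finset.union_sdiff_of_subset htb', hq1, union_comm]
    rfl
  have hpq : p1 ≠ q1 := by
    intro h
    exact hUne (by rw [ha', hb', h])
  have : eUnion p = insert p1 (insert q1 t) := by
    rw [habeq, eUnion_mk, ha', hb']
    ext z
    simp only [mem_union, mem_insert]
    tauto
  rw [this, card_insert_of_notMem, card_insert_of_notMem hq1'.2, htc]
  rw [mem_insert]
  rintro (h | h)
  · exact hpq h
  · exact hp1'.2 h

lemma exists_incident_edge {V : Finset (Finset α)} {E : Finset (Sym2 (Finset α))}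
    (htree : IsTreeOn V E) (h2 : 1 < V.card) {u : Finset α} (hu : u ∈ V) :
    ∃ e ∈ E, u ∈ e := by
  obtain ⟨u', hu', hne⟩ := Finset.exists_mem_ne h2 u
  obtain ⟨p⟩ := htree.2.2.2 u hu u' hu'
  cases p with
  | nil => exact absurd (rfl : u = u) hne
  | cons hadj q => exact ⟨_, hadj.2, Sym2.mem_mk_left _ _⟩

lemma gauss_sum : ∀ n : ℕ, (∑ k ∈ Icc 1 n, k) * 2 = n * (n + 1) := by
  intro n
  induction n with
  | zero => simp
  | succ n ihn =>
    rw [Finset.sum_Icc_succ_top (by omega : 1 ≤ n + 1)]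
    ring_nf
    ring_nf at ihn
    omega

lemma vine_facts (𝒱 : RegularVine α) :
    ∀ k, 1 ≤ k → k + 1 ≤ Fintype.card α →
      (∀ v ∈ 𝒱.V k, v.card = k) ∧ ((𝒱.V k).card + k = Fintype.card α + 1) ∧
      (∀ e ∈ 𝒱.E k, (eUnion e).card = k + 1) ∧
      Set.InjOn eUnion ((𝒱.E k) : Set (Sym2 (Finset α))) ∧ STp (𝒱.V k) (𝒱.E k) := by
  intro k hk1
  induction k, hk1 using Nat.le_induction with
  | base =>
    intro hkd
    have htree := 𝒱.tree 1 le_rfl hkd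
    have hnode : ∀ v ∈ 𝒱.V 1, v.card = 1 := by
      intro v hv
      rw [𝒱.hV1, mem_image] at hv
      obtain ⟨a, -, rfl⟩ := hv
      exact card_singleton a
    have hVcard : (𝒱.V 1).card + 1 = Fintype.card α + 1 := by
      rw [𝒱.hV1, Finset.card_image_of_injective _ Finset.singleton_injective, card_univ]
    have hU : ∀ e ∈ 𝒱.E 1, (eUnion e).card = 2 := by
      intro e he
      induction e with
      | _ A B =>
        have hA : A ∈ 𝒱.V 1 := htree.1 _ he _ (Sym2.mem_mk_left _ _)
        have hB : B ∈ 𝒱.V 1 := htree.1 _ he _ (Sym2.mem_mk_right _ _)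
        have hAB : A ≠ B := by
          intro h; exact htree.2.1 _ he (by simp [h])
        rw [eUnion_mk, card_union_of_disjoint, hnode _ hA, hnode _ hB]
        rw [𝒱.hV1, mem_image] at hA hB
        obtain ⟨a, -, rfl⟩ := hA
        obtain ⟨b, -, rfl⟩ := hB
        rw [Finset.disjoint_singleton]
        intro h
        exact hAB (h ▸ rfl)
    have hst : STp (𝒱.V 1) (𝒱.E 1) := by
      intro x v hv w hw hxv hxw
      rw [𝒱.hV1, mem_image] at hv hw
      obtain ⟨a, -, rfl⟩ := hv
      obtain ⟨b, -, rfl⟩ := hw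
      rw [mem_singleton] at hxv hxw
      rw [← hxv, ← hxw]
    exact ⟨hnode, hVcard, hU, injOn_eUnion htree hnode hU hst, hst⟩
  | succ k hk ih =>
    intro hkd
    obtain ⟨hnode, hVcard, hU, hinj, hst⟩ := ih (by omega)
    have htreek := 𝒱.tree k hk (by omega)
    have htreek1 := 𝒱.tree (k + 1) (by omega) hkd
    have hprox := 𝒱.proximity k hk
    have hVs := 𝒱.hVsucc k hk
    have hnode1 : ∀ v ∈ 𝒱.V (k + 1), v.card = k + 1 := by
      intro v hv
      rw [hVs, mem_image] at hv
      obtain ⟨e, he, rfl⟩ := hv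
      exact hU _ he
    have hVcard1 : (𝒱.V (k + 1)).card + (k + 1) = Fintype.card α + 1 := by
      have hE := htreek.card_edges (Finset.card_pos.mp (by omega))
      rw [hVs, Finset.card_image_of_injOn hinj]
      omega
    have hU1 : ∀ e ∈ 𝒱.E (k + 1), (eUnion e).card = (k + 1) + 1 :=
      eUnion_card_succ htreek.1 hnode hU htreek1.2.1 hprox
    have hst1 : STp (𝒱.V (k + 1)) (𝒱.E (k + 1)) :=
      STp_succ htreek hinj hst hprox htreek1
    exact ⟨hnode1, hVcard1, hU1, injOn_eUnion htreek1 hnode1 hU1 hst1, hst1⟩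

lemma vine_up (𝒱 : RegularVine α) {k : ℕ} (hk : 1 ≤ k) {e : Sym2 (Finset α)}
    (he : e ∈ 𝒱.E k) :
    ∀ m, k + 1 ≤ m → m ≤ Fintype.card α → ∃ u ∈ 𝒱.V m, condPair e ⊆ u := by
  intro m hm
  induction m, hm using Nat.le_induction with
  | base =>
    intro _
    refine ⟨eUnion e, ?_, condPair_subset_eUnion e⟩
    rw [𝒱.hVsucc k hk]
    exact mem_image_of_mem _ he
  | succ m hm ihm =>
    intro hmd
    obtain ⟨u, hu, hsub⟩ := ihm (by omega)
    have hm1 : 1 ≤ m := by omega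
    obtain ⟨-, hVcard, -, -, -⟩ := vine_facts 𝒱 m hm1 (by omega)
    have htreem := 𝒱.tree m hm1 (by omega)
    obtain ⟨e', he', hue'⟩ := exists_incident_edge htreem (by omega) hu
    refine ⟨eUnion e', ?_, hsub.trans ((subset_eUnion_of_mem hue'))⟩
    rw [𝒱.hVsucc m hm1]
    exact mem_image_of_mem _ he'

lemma vine_cross (𝒱 : RegularVine α) {k m : ℕ} (hk : 1 ≤ k) (hkm : k < m)
    (hmd : m + 1 ≤ Fintype.card α) {e f : Sym2 (Finset α)}
    (he : e ∈ 𝒱.E k) (hf : f ∈ 𝒱.E m) : condPair e ≠ condPair f := by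
  intro heq
  obtain ⟨u, hu, hsub⟩ := vine_up 𝒱 hk he m (by omega) (by omega)
  have hm1 : 1 ≤ m := by omega
  obtain ⟨hnode, -, hU, -, hst⟩ := vine_facts 𝒱 m hm1 hmd
  have htreem := 𝒱.tree m hm1 hmd
  obtain ⟨C, D, x', y', hff, hC, hD, hxC, hxD, hyD, hyC, hxy', hpf⟩ :=
    pair_struct htreem.1 htreem.2.1 hnode hU hf
  rw [heq, hpf] at hsub
  exact NII htreem hst (hff ▸ hf) hxC hxD hyD hyC hu
    (hsub (mem_insert_self _ _)) (hsub (mem_insert_of_mem (mem_singleton_self _)))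

/-- In a regular vine on `d` elements, the total number of edges over all trees is
`d(d-1)/2`, and the map `e ↦ {a_e, b_e}` sending an edge to its conditioned pair is
a bijection onto the unordered pairs of elements of `V₁`: every pair of size 2 is
the conditioned set of exactly one edge of the vine. -/
theorem vine_condPair_bijective {d : ℕ} (𝒱 : RegularVine (Fin d)) :
    (∑ k ∈ Finset.Icc 1 (d - 1), (𝒱.E k).card) = d * (d - 1) / 2 ∧
    ∀ P : Finset (Fin d), P.card = 2 →
      ∃! ke : ℕ × Sym2 (Finset (Fin d)),
        ke.1 ∈ Finset.Icc 1 (d - 1) ∧ ke.2 ∈ 𝒱.E ke.1 ∧ condPair ke.2 = P := by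
  have hcard : Fintype.card (Fin d) = d := Fintype.card_fin d
  by_cases hd : d < 2
  · constructor
    · have h0 : Finset.Icc 1 (d - 1) = ∅ := by
        apply Finset.Icc_eq_empty
        omega
      rw [h0, Finset.sum_empty]
      interval_cases d <;> simp
    · intro P hP
      exfalso
      have := Finset.card_le_univ P
      rw [hcard] at this
      omega
  push_neg at hd
  -- edge counts
  have hEcard : ∀ k, 1 ≤ k → k + 1 ≤ d → (𝒱.E k).card + k = d := by
    intro k hk1 hkd
    obtain ⟨-, hVcard, -, -, -⟩ := vine_facts 𝒱 k hk1 (by rw [hcard]; omega)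
    have htree := 𝒱.tree k hk1 (by rw [hcard]; omega)
    rw [hcard] at hVcard
    have := htree.card_edges (Finset.card_pos.mp (by omega))
    omega
  have hsum : (∑ k ∈ Finset.Icc 1 (d - 1), (𝒱.E k).card) = d * (d - 1) / 2 := by
    have h1 : ∀ k ∈ Finset.Icc 1 (d - 1), (𝒱.E k).card = d - k := by
      intro k hk
      rw [mem_Icc] at hk
      have := hEcard k hk.1 (by omega)
      omega
    rw [Finset.sum_congr rfl h1]
    have h2 : ∑ k ∈ Finset.Icc 1 (d - 1), (d - k) = ∑ k ∈ Finset.Icc 1 (d - 1), k := by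
      refine Finset.sum_nbij' (fun k => d - k) (fun k => d - k) ?_ ?_ ?_ ?_ ?_ <;>
        intro a ha <;> simp only [mem_Icc] at * <;> omega
    rw [h2]
    have h3 := gauss_sum (d - 1)
    have h4 : (d - 1) * (d - 1 + 1) = d * (d - 1) := by
      rw [Nat.sub_add_cancel (by omega), Nat.mul_comm]
    rw [h4] at h3
    omega
  refine ⟨hsum, ?_⟩
  -- uniqueness of the conditioned pair
  have uniq : ∀ (k m : ℕ) (e f : Sym2 (Finset (Fin d))), 1 ≤ k → k + 1 ≤ d →
      1 ≤ m → m + 1 ≤ d → e ∈ 𝒱.E k → f ∈ 𝒱.E m → condPair e = condPair f →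
      k = m ∧ e = f := by
    intro k m e f hk1 hkd hm1 hmd he hf heq
    rcases lt_trichotomy k m with h | h | h
    · exact absurd heq (vine_cross 𝒱 hk1 h (by rw [hcard]; omega) he hf)
    · subst h
      obtain ⟨hnode, -, hU, -, hst⟩ := vine_facts 𝒱 k hk1 (by rw [hcard]; omega)
      have htree := 𝒱.tree k hk1 (by rw [hcard]; omega)
      exact ⟨rfl, condPair_inj htree hnode hU hst e he f hf heq⟩
    · exact absurd heq.symm (vine_cross 𝒱 hm1 h (by rw [hcard]; omega) hf he)
  -- the finset of all (tree index, edge) pairs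
  set F : Finset (ℕ × Sym2 (Finset (Fin d))) :=
    (Finset.Icc 1 (d - 1)).biUnion
      (fun k => (𝒱.E k).image (fun e => (k, e))) with hFdef
  have hmemF : ∀ ke : ℕ × Sym2 (Finset (Fin d)),
      ke ∈ F ↔ ke.1 ∈ Finset.Icc 1 (d - 1) ∧ ke.2 ∈ 𝒱.E ke.1 := by
    rintro ⟨k, e⟩
    simp only [hFdef, mem_biUnion, mem_image, Prod.mk.injEq]
    constructor
    · rintro ⟨a, ha, e', he', rfl, rfl⟩
      exact ⟨ha, he'⟩
    · rintro ⟨hk, he⟩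
      exact ⟨k, hk, e, he, rfl, rfl⟩
  have hcardF : F.card = d * (d - 1) / 2 := by
    rw [hFdef, Finset.card_biUnion]
    · rw [← hsum]
      refine Finset.sum_congr rfl fun k _ => ?_
      exact Finset.card_image_of_injective _ (fun e1 e2 h => (Prod.mk.injEq _ _ _ _).mp h |>.2)
    · intro k hk m hm hkm
      rw [Function.onFun, Finset.disjoint_left]
      rintro ⟨a, e⟩ hae hae'
      rw [mem_image] at hae hae'
      obtain ⟨e1, -, h1⟩ := hae
      obtain ⟨e2, -, h2⟩ := hae'
      injection h1 with ha1 he1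
      injection h2 with ha2 he2
      exact hkm (ha1.trans ha2.symm)
  have hinjF : Set.InjOn (fun ke : ℕ × Sym2 (Finset (Fin d)) => condPair ke.2) F := by
    rintro ⟨k, e⟩ hke ⟨m, f⟩ hmf heq
    rw [Finset.mem_coe, hmemF] at hke hmf
    rw [mem_Icc] at hke hmf
    obtain ⟨hk, he⟩ := hke
    obtain ⟨hm, hf⟩ := hmf
    obtain ⟨h1, h2⟩ := uniq k m e f hk.1 (by omega) hm.1 (by omega) he hf heq
    rw [Prod.mk.injEq]
    exact ⟨h1, h2⟩
  have himg : F.image (fun ke => condPair ke.2) = Finset.powersetCard 2 Finset.univ := by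
    apply Finset.eq_of_subset_of_card_le
    · intro P hP
      rw [mem_image] at hP
      obtain ⟨⟨k, e⟩, hke, rfl⟩ := hP
      rw [hmemF, mem_Icc] at hke
      obtain ⟨⟨hk1, hk2⟩, he⟩ := hke
      obtain ⟨hnode, -, hU, -, -⟩ := vine_facts 𝒱 k hk1 (by rw [hcard]; omega)
      have htree := 𝒱.tree k hk1 (by rw [hcard]; omega)
      obtain ⟨A, B, x, y, -, -, -, -, -, -, -, hxy, hpe⟩ :=
        pair_struct htree.1 htree.2.1 hnode hU he
      rw [Finset.mem_powersetCard]
      refine ⟨subset_univ _, ?_⟩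
      rw [hpe, card_insert_of_notMem (by simpa using hxy), card_singleton]
    · rw [Finset.card_powersetCard, card_univ, hcard, Nat.choose_two_right,
        Finset.card_image_of_injOn hinjF, hcardF]
  intro P hP
  have hPT : P ∈ Finset.powersetCard 2 Finset.univ := by
    rw [Finset.mem_powersetCard]
    exact ⟨subset_univ _, hP⟩
  rw [← himg, mem_image] at hPT
  obtain ⟨ke, hke, hkeP⟩ := hPT
  refine ⟨ke, ⟨((hmemF ke).mp hke).1, ((hmemF ke).mp hke).2, hkeP⟩, ?_⟩
  rintro ⟨k', e'⟩ ⟨h1, h2, h3⟩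
  have h4 : (k', e') ∈ F := (hmemF (k', e')).mpr ⟨h1, h2⟩
  exact hinjF h4 hke (h3.trans hkeP.symm)
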